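/- For every a∈ℝ the polynomial ψ_a satisfies: (i) Dψ_a(x)[Jx] = 0 for all x∈ℝ⁴ (ψ_a is a first integral of the Hopf field); (ii) Δψ_a(p) = 8(3ψ_a(p) − 2) for all p∈S³; equivalently, the Euclidean Laplacian of ψ_a satisfies Σᵢ ∂²ψ_a/∂xᵢ² = 16|x|² identically on ℝ⁴. -/

import Mathlib

open RealInnerProductSpace

noncomputable section

/-- ℝ⁴ with coordinates (x₁,y₁,x₂,y₂) and the Euclidean inner product; S³ is the set
of `p` with `‖p‖ = 1`. -/
abbrev E4 := EuclideanSpace ℝ (Fin 4)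

/-- The linear map `J(x₁,y₁,x₂,y₂) = (−y₁,x₁,−y₂,x₂)`; its restriction to S³ is the
Hopf field ξ. -/
def Jm (p : E4) : E4 := WithLp.toLp 2 ![-p 1, p 0, -p 3, p 2]

/-- The linear map `J'(x₁,y₁,x₂,y₂) = (−y₁,x₁,y₂,−x₂)`; its restriction to S³ is the
anti-Hopf field ξ'. -/
def Jm' (p : E4) : E4 := WithLp.toLp 2 ![-p 1, p 0, p 3, -p 2]

/-- The frame field `X₁(p) = (−x₂,y₂,x₁,−y₁)`. -/
def X1 (p : E4) : E4 := WithLp.toLp 2 ![-p 2, p 3, p 0, -p 1]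

/-- The frame field `X₂(p) = (−y₂,−x₂,y₁,x₁)`. -/
def X2 (p : E4) : E4 := WithLp.toLp 2 ![-p 3, -p 2, p 1, p 0]

/-- Orthogonal projection onto the tangent space of S³ at `p`: `P_p(v) = v − ⟨p,v⟩p`. -/
def Pt (p v : E4) : E4 := v - ⟪p, v⟫ • p

/-- A (smooth) tangent field on S³: a smooth map `u : ℝ⁴ → ℝ⁴` with `⟨p, u p⟩ = 0`
for every `p ∈ S³`. -/
def IsTangentField (u : E4 → E4) : Prop :=
  ContDiff ℝ (⊤ : ℕ∞) u ∧ ∀ p : E4, ‖p‖ = 1 → ⟪p, u p⟫ = 0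

/-- Levi-Civita covariant derivative of the round metric: `(∇_u v)(p) = P_p(Dv(p)[u(p)])`. -/
def scov (u v : E4 → E4) (p : E4) : E4 := Pt p (fderiv ℝ v p (u p))

/-- Spherical gradient: `(grad f)(p) = P_p(∇f(p))`. -/
def sgrad (f : E4 → ℝ) (p : E4) : E4 := Pt p (gradient f p)

/-- Spherical divergence: `(div u)(p) = tr(Du(p)) − ⟨Du(p)[p], p⟩`. -/
def sdiv (u : E4 → E4) (p : E4) : ℝ :=
  LinearMap.trace ℝ E4 (fderiv ℝ u p).toLinearMap - ⟪fderiv ℝ u p p, p⟫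

/-- Spherical Laplacian with geometers' sign: `Δf = −div (grad f)`. -/
def slap (f : E4 → ℝ) (p : E4) : ℝ := - sdiv (sgrad f) p

/-- The transverse complex structure of the standard Sasakian structure on S³:
`φ_p(v) = Jv + ⟨v, Jp⟩p`. -/
def phiT (p v : E4) : E4 := Jm v + ⟪v, Jm p⟫ • p

/-- `u` is a steady Euler field on S³ with pressure `pr`: `div u = 0` on S³ and
`(∇_u u)(p) = −(grad pr)(p)` for all `p ∈ S³`. -/
def IsSteadyEulerWithPressure (u : E4 → E4) (pr : E4 → ℝ) : Prop :=
  ∀ p : E4, ‖p‖ = 1 → sdiv u p = 0 ∧ scov u u p = - sgrad pr p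

/-- `u` is a steady Euler field on S³, for some smooth pressure. -/
def IsSteadyEuler (u : E4 → E4) : Prop :=
  ∃ pr : E4 → ℝ, ContDiff ℝ (⊤ : ℕ∞) pr ∧ IsSteadyEulerWithPressure u pr

/-- A tangent field `u` is localizable if `D(|u|²)(p)[u(p)] = 0` for all `p ∈ S³`. -/
def IsLocalizable (u : E4 → E4) : Prop :=
  ∀ p : E4, ‖p‖ = 1 → fderiv ℝ (fun q => ⟪u q, u q⟫) p (u p) = 0

/-- The function `q(p) = x₁² + y₁²`. -/
def qf (p : E4) : ℝ := p 0 ^ 2 + p 1 ^ 2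

/-- The KKPS family: `u(p) = A(q(p))·Jp + B(q(p))·J'p`. -/
def kkps (A B : ℝ → ℝ) (p : E4) : E4 := A (qf p) • Jm p + B (qf p) • Jm' p

/-- Determinant of four vectors in ℝ⁴ (given as rows). -/
def det4 (a b c d : E4) : ℝ :=
  Matrix.det (Matrix.of ![(fun i => a i), (fun i => b i), (fun i => c i), (fun i => d i)])

/-- Cross product of tangent vectors at `p ∈ S³`: `⟨v ×_p w, z⟩ = det(p,v,w,z)`. -/
def crossS (p v w : E4) : E4 :=
  WithLp.toLp 2 (fun i => det4 p v w (WithLp.toLp 2 (Pi.single i 1 : Fin 4 → ℝ)))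

/-- `c` is the curl of the tangent field `u` on S³: `c` is a tangent field such that
`⟨(∇_v u)(p), w⟩ − ⟨(∇_w u)(p), v⟩ = ⟨c(p), v ×_p w⟩` for all tangent `v, w` at `p ∈ S³`
(with the orientation convention given by `det4`, for which `curl ξ = 2ξ`). -/
def IsCurlOf (u c : E4 → E4) : Prop :=
  IsTangentField c ∧
  ∀ p : E4, ‖p‖ = 1 → ∀ v w : E4, ⟪p, v⟫ = 0 → ⟪p, w⟫ = 0 →
    ⟪Pt p (fderiv ℝ u p v), w⟫ - ⟪Pt p (fderiv ℝ u p w), v⟫ = ⟪c p, crossS p v w⟫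

/-- The Sasakian KKPS ansatz on S³: `u(p) = F(ψ(p))·Jp + φ_p((grad (G∘ψ))(p))`. -/
def ansatz (ψ : E4 → ℝ) (F G : ℝ → ℝ) (p : E4) : E4 :=
  F (ψ p) • Jm p + phiT p (sgrad (fun q => G (ψ q)) p)

/-- The quartic polynomial `ψ_a`, a deformation of Nomizu's isoparametric polynomial. -/
def ψa (a : ℝ) (p : E4) : ℝ :=
  (1/2) * ((p 0 ^ 2 + p 1 ^ 2 + p 2 ^ 2 + p 3 ^ 2) ^ 2
      + (p 0 ^ 2 + p 1 ^ 2 - p 2 ^ 2 - p 3 ^ 2) ^ 2)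
    + 2 * a * ((p 0 ^ 2 - p 1 ^ 2) * (p 2 ^ 2 - p 3 ^ 2) + 4 * p 0 * p 1 * p 2 * p 3)

/-- The field `u_a(p) = F(ψ_a(p))·Jp + φ_p((grad ψ_a)(p))`. -/
def nomizuField (a : ℝ) (F : ℝ → ℝ) (p : E4) : E4 :=
  F (ψa a p) • Jm p + phiT p (sgrad (ψa a) p)

/-- The field `u(p) = 2a₁(x₁y₂+y₁x₂)·X₁(p) + 2a₂(x₁x₂−y₁y₂)·X₂(p)`. -/
def abField (a₁ a₂ : ℝ) (p : E4) : E4 :=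
  (2 * a₁ * (p 0 * p 3 + p 1 * p 2)) • X1 p + (2 * a₂ * (p 0 * p 2 - p 1 * p 3)) • X2 p


lemma proj_hasFDerivAt (i : Fin 4) (x : E4) :
    HasFDerivAt (fun p : E4 => p i) (EuclideanSpace.proj i : E4 →L[ℝ] ℝ) x := by
  exact (EuclideanSpace.proj i : E4 →L[ℝ] ℝ).hasFDerivAt

/-- The Euclidean gradient of `ψa`. -/
def gv (a : ℝ) (x : E4) : E4 :=
  WithLp.toLp 2 ![4*x 0*(x 0^2+x 1^2) + 4*a*(x 0*(x 2^2 - x 3^2)) + 8*a*(x 1*x 2*x 3),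
    4*x 1*(x 0^2+x 1^2) - 4*a*(x 1*(x 2^2 - x 3^2)) + 8*a*(x 0*x 2*x 3),
    4*x 2*(x 2^2+x 3^2) + 4*a*(x 2*(x 0^2 - x 1^2)) + 8*a*(x 0*x 1*x 3),
    4*x 3*(x 2^2+x 3^2) - 4*a*(x 3*(x 0^2 - x 1^2)) + 8*a*(x 0*x 1*x 2)]

lemma hasGradientAt_psi (a : ℝ) (x : E4) : HasGradientAt (ψa a) (gv a x) x := by
  rw [hasGradientAt_iff_hasFDerivAt]
  have h0 := proj_hasFDerivAt 0 x; have h1 := proj_hasFDerivAt 1 x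
  have h2 := proj_hasFDerivAt 2 x; have h3 := proj_hasFDerivAt 3 x
  have hs := ((((h0.mul h0).add (h1.mul h1)).add (h2.mul h2)).add (h3.mul h3))
  have hd := ((((h0.mul h0).add (h1.mul h1)).sub (h2.mul h2)).sub (h3.mul h3))
  have hφ := ((hs.mul hs).add (hd.mul hd)).const_mul (1/2) |>.add
      (((((h0.mul h0).sub (h1.mul h1)).mul ((h2.mul h2).sub (h3.mul h3))).add
        ((((h0.const_mul 4).mul h1).mul h2).mul h3)).const_mul (2*a))
  have hfun : ψa a = (fun p : E4 =>
      1/2 * ((p 0 * p 0 + p 1 * p 1 + p 2 * p 2 + p 3 * p 3) *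
             (p 0 * p 0 + p 1 * p 1 + p 2 * p 2 + p 3 * p 3)
           + (p 0 * p 0 + p 1 * p 1 - p 2 * p 2 - p 3 * p 3) *
             (p 0 * p 0 + p 1 * p 1 - p 2 * p 2 - p 3 * p 3))
      + 2 * a * ((p 0 * p 0 - p 1 * p 1) * (p 2 * p 2 - p 3 * p 3)
           + 4 * p 0 * p 1 * p 2 * p 3)) := by
    funext p; simp only [ψa]; ring
  rw [hfun]
  refine hφ.congr_fderiv ?_
  ext v
  simp [gv, InnerProductSpace.toDual_apply_apply, PiLp.inner_apply, RCLike.inner_apply,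
    Fin.sum_univ_four, smul_eq_mul]
  ring

@[simp] lemma proj_apply' (i : Fin 4) (v : E4) :
    (EuclideanSpace.proj i : E4 →L[ℝ] ℝ) v = v i := rfl

lemma fderiv_psi (a : ℝ) (x : E4) :
    fderiv ℝ (ψa a) x = (InnerProductSpace.toDual ℝ E4) (gv a x) :=
  (hasGradientAt_psi a x).hasFDerivAt.fderiv

lemma trace_eq_sum (L : E4 →L[ℝ] E4) :
    LinearMap.trace ℝ E4 L.toLinearMap
      = ∑ i : Fin 4, L (EuclideanSpace.single i 1) i := by
  rw [LinearMap.trace_eq_matrix_trace ℝ (EuclideanSpace.basisFun (Fin 4) ℝ).toBasis]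
  simp [Matrix.trace, Matrix.diag, LinearMap.toMatrix_apply,
    OrthonormalBasis.coe_toBasis, OrthonormalBasis.coe_toBasis_repr_apply,
    EuclideanSpace.basisFun_repr, EuclideanSpace.basisFun_apply]


set_option maxHeartbeats 2000000 in
/-- for every `a ∈ ℝ`, (i) `ψ_a` is a first integral of the Hopf field,
(ii) `Δψ_a = 8(3ψ_a − 2)` on S³; equivalently the Euclidean Laplacian of `ψ_a` is
`16|x|²` on all of ℝ⁴. -/
theorem statement10 (a : ℝ) :
    (∀ x : E4, fderiv ℝ (ψa a) x (Jm x) = 0) ∧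
    (∀ p : E4, ‖p‖ = 1 → slap (ψa a) p = 8 * (3 * ψa a p - 2)) ∧
    (∀ x : E4,
      (∑ i : Fin 4,
        fderiv ℝ (fun y => fderiv ℝ (ψa a) y (EuclideanSpace.single i 1)) x
          (EuclideanSpace.single i 1))
        = 16 * ‖x‖ ^ 2) := by
  refine ⟨?_, ?_, ?_⟩
  · intro x
    rw [fderiv_psi]
    simp [Jm, gv, InnerProductSpace.toDual_apply_apply, PiLp.inner_apply, RCLike.inner_apply,
      Fin.sum_univ_four]
    ring
  · intro p hp
    have hq : p 0 ^ 2 + p 1 ^ 2 + p 2 ^ 2 + p 3 ^ 2 = 1 := by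
      have h1 : ⟪p, p⟫ = 1 := by
        rw [real_inner_self_eq_norm_sq, hp]; norm_num
      rw [PiLp.inner_apply, Fin.sum_univ_four] at h1
      simpa [RCLike.inner_apply, pow_two] using h1
    have h0 := proj_hasFDerivAt 0 p; have h1 := proj_hasFDerivAt 1 p
    have h2 := proj_hasFDerivAt 2 p; have h3 := proj_hasFDerivAt 3 p
    have hP0 := (((((h0.mul (h0.mul h0)).const_mul 4).add
        ((h0.mul (h1.mul h1)).const_mul 4)).add
        ((h0.mul (h2.mul h2)).const_mul (4*a))).sub
        ((h0.mul (h3.mul h3)).const_mul (4*a))).add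
        ((h1.mul (h2.mul h3)).const_mul (8*a))
    have hP1 := (((((h1.mul (h0.mul h0)).const_mul 4).add
        ((h1.mul (h1.mul h1)).const_mul 4)).sub
        ((h1.mul (h2.mul h2)).const_mul (4*a))).add
        ((h1.mul (h3.mul h3)).const_mul (4*a))).add
        ((h0.mul (h2.mul h3)).const_mul (8*a))
    have hP2 := (((((h2.mul (h2.mul h2)).const_mul 4).add
        ((h2.mul (h3.mul h3)).const_mul 4)).add
        ((h2.mul (h0.mul h0)).const_mul (4*a))).sub
        ((h2.mul (h1.mul h1)).const_mul (4*a))).add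
        ((h0.mul (h1.mul h3)).const_mul (8*a))
    have hP3 := (((((h3.mul (h2.mul h2)).const_mul 4).add
        ((h3.mul (h3.mul h3)).const_mul 4)).sub
        ((h3.mul (h0.mul h0)).const_mul (4*a))).add
        ((h3.mul (h1.mul h1)).const_mul (4*a))).add
        ((h0.mul (h1.mul h2)).const_mul (8*a))
    have hΦ := (((((h0.mul h0).add (h1.mul h1)).mul
          ((h0.mul h0).add (h1.mul h1))).const_mul 4).add
        ((((h2.mul h2).add (h3.mul h3)).mul
          ((h2.mul h2).add (h3.mul h3))).const_mul 4)).add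
        (((((h0.mul h0).sub (h1.mul h1)).mul
          ((h2.mul h2).sub (h3.mul h3))).const_mul (8*a)).add
        ((h0.mul (h1.mul (h2.mul h3))).const_mul (32*a)))
    have hW := ((((hP0.smul_const (EuclideanSpace.single (0:Fin 4) (1:ℝ))).add
        (hP1.smul_const (EuclideanSpace.single (1:Fin 4) (1:ℝ)))).add
        (hP2.smul_const (EuclideanSpace.single (2:Fin 4) (1:ℝ)))).add
        (hP3.smul_const (EuclideanSpace.single (3:Fin 4) (1:ℝ)))).sub
        (hΦ.smul (hasFDerivAt_id p))
    have hpt : ∀ y : E4, sgrad (ψa a) y =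
        (4 * (y 0 * (y 0 * y 0)) + 4 * (y 0 * (y 1 * y 1)) + 4*a * (y 0 * (y 2 * y 2))
            - 4*a * (y 0 * (y 3 * y 3)) + 8*a * (y 1 * (y 2 * y 3)))
            • EuclideanSpace.single (0:Fin 4) (1:ℝ)
        + (4 * (y 1 * (y 0 * y 0)) + 4 * (y 1 * (y 1 * y 1)) - 4*a * (y 1 * (y 2 * y 2))
            + 4*a * (y 1 * (y 3 * y 3)) + 8*a * (y 0 * (y 2 * y 3)))
            • EuclideanSpace.single (1:Fin 4) (1:ℝ)
        + (4 * (y 2 * (y 2 * y 2)) + 4 * (y 2 * (y 3 * y 3)) + 4*a * (y 2 * (y 0 * y 0))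
            - 4*a * (y 2 * (y 1 * y 1)) + 8*a * (y 0 * (y 1 * y 3)))
            • EuclideanSpace.single (2:Fin 4) (1:ℝ)
        + (4 * (y 3 * (y 2 * y 2)) + 4 * (y 3 * (y 3 * y 3)) - 4*a * (y 3 * (y 0 * y 0))
            + 4*a * (y 3 * (y 1 * y 1)) + 8*a * (y 0 * (y 1 * y 2)))
            • EuclideanSpace.single (3:Fin 4) (1:ℝ)
        - (4 * ((y 0 * y 0 + y 1 * y 1) * (y 0 * y 0 + y 1 * y 1))
            + 4 * ((y 2 * y 2 + y 3 * y 3) * (y 2 * y 2 + y 3 * y 3))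
            + (8*a * ((y 0 * y 0 - y 1 * y 1) * (y 2 * y 2 - y 3 * y 3))
              + 32*a * (y 0 * (y 1 * (y 2 * y 3))))) • id y := by
      intro y
      have hiy : (⟪y, gv a y⟫ : ℝ)
          = 4*((y 0*y 0+y 1*y 1)*(y 0*y 0+y 1*y 1)) + 4*((y 2*y 2+y 3*y 3)*(y 2*y 2+y 3*y 3))
            + (8*a*((y 0*y 0-y 1*y 1)*(y 2*y 2-y 3*y 3)) + 32*a*(y 0*(y 1*(y 2*y 3)))) := by
        simp [gv, PiLp.inner_apply, RCLike.inner_apply, Fin.sum_univ_four]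
        ring
      rw [sgrad, Pt, (hasGradientAt_psi a y).gradient, hiy]
      ext j
      fin_cases j <;>
        simp [gv, PiLp.sub_apply, PiLp.add_apply, PiLp.smul_apply,
          EuclideanSpace.single_apply, smul_eq_mul] <;> ring
    have hs := hW.congr_of_eventuallyEq (Filter.Eventually.of_forall hpt)
    simp only [slap, sdiv]
    rw [hs.fderiv, trace_eq_sum]
    simp only [ψa, ContinuousLinearMap.add_apply, ContinuousLinearMap.sub_apply,
      ContinuousLinearMap.smul_apply, ContinuousLinearMap.smulRight_apply,
      ContinuousLinearMap.coe_smul', ContinuousLinearMap.coe_id', Pi.smul_apply, id_eq,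
      PiLp.inner_apply, RCLike.inner_apply, starRingEnd_apply, star_trivial,
      Fin.sum_univ_four, PiLp.add_apply, PiLp.sub_apply, PiLp.smul_apply,
      EuclideanSpace.single_apply, proj_apply', smul_eq_mul, Fin.isValue, ite_true,
      ite_false, reduceIte, Fin.reduceEq, one_ne_zero, mul_one, mul_zero, add_zero, zero_add,
      Pi.mul_apply, Pi.add_apply, Pi.sub_apply]
    linear_combination
      (-(16 + 20 * ((1/2) * ((p 0 ^ 2 + p 1 ^ 2 + p 2 ^ 2 + p 3 ^ 2) ^ 2
          + (p 0 ^ 2 + p 1 ^ 2 - p 2 ^ 2 - p 3 ^ 2) ^ 2)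
        + 2 * a * ((p 0 ^ 2 - p 1 ^ 2) * (p 2 ^ 2 - p 3 ^ 2)
          + 4 * p 0 * p 1 * p 2 * p 3)))) * hq
  · intro x
    have h0 := proj_hasFDerivAt 0 x; have h1 := proj_hasFDerivAt 1 x
    have h2 := proj_hasFDerivAt 2 x; have h3 := proj_hasFDerivAt 3 x
    have hn : (16 : ℝ) * ‖x‖ ^ 2 = 16 * (x 0 ^ 2 + x 1 ^ 2 + x 2 ^ 2 + x 3 ^ 2) := by
      rw [← real_inner_self_eq_norm_sq, PiLp.inner_apply, Fin.sum_univ_four]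
      simp [RCLike.inner_apply, pow_two]
    have key : ∀ (i : Fin 4) (P : E4 → ℝ) (D : E4 →L[ℝ] ℝ),
        (∀ y : E4, fderiv ℝ (ψa a) y (EuclideanSpace.single i 1) = P y) →
        HasFDerivAt P D x →
        fderiv ℝ (fun y : E4 => fderiv ℝ (ψa a) y (EuclideanSpace.single i 1)) x
          (EuclideanSpace.single i 1) = D (EuclideanSpace.single i 1) := by
      intro i P D hPy hPD
      have : (fun y : E4 => fderiv ℝ (ψa a) y (EuclideanSpace.single i 1)) = P :=
        funext hPy
      rw [this, hPD.fderiv]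
    have hP0 := (((((h0.mul (h0.mul h0)).const_mul 4).add
        ((h0.mul (h1.mul h1)).const_mul 4)).add
        ((h0.mul (h2.mul h2)).const_mul (4*a))).sub
        ((h0.mul (h3.mul h3)).const_mul (4*a))).add
        ((h1.mul (h2.mul h3)).const_mul (8*a))
    have hP1 := (((((h1.mul (h0.mul h0)).const_mul 4).add
        ((h1.mul (h1.mul h1)).const_mul 4)).sub
        ((h1.mul (h2.mul h2)).const_mul (4*a))).add
        ((h1.mul (h3.mul h3)).const_mul (4*a))).add
        ((h0.mul (h2.mul h3)).const_mul (8*a))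
    have hP2 := (((((h2.mul (h2.mul h2)).const_mul 4).add
        ((h2.mul (h3.mul h3)).const_mul 4)).add
        ((h2.mul (h0.mul h0)).const_mul (4*a))).sub
        ((h2.mul (h1.mul h1)).const_mul (4*a))).add
        ((h0.mul (h1.mul h3)).const_mul (8*a))
    have hP3 := (((((h3.mul (h2.mul h2)).const_mul 4).add
        ((h3.mul (h3.mul h3)).const_mul 4)).sub
        ((h3.mul (h0.mul h0)).const_mul (4*a))).add
        ((h3.mul (h1.mul h1)).const_mul (4*a))).add
        ((h0.mul (h1.mul h2)).const_mul (8*a))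
    rw [Fin.sum_univ_four,
      key 0 _ _ (fun y => by
        rw [fderiv_psi]
        simp [gv, InnerProductSpace.toDual_apply_apply, PiLp.inner_apply, RCLike.inner_apply,
          Fin.sum_univ_four, EuclideanSpace.single_apply]
        ring) hP0,
      key 1 _ _ (fun y => by
        rw [fderiv_psi]
        simp [gv, InnerProductSpace.toDual_apply_apply, PiLp.inner_apply, RCLike.inner_apply,
          Fin.sum_univ_four, EuclideanSpace.single_apply]
        ring) hP1,
      key 2 _ _ (fun y => by
        rw [fderiv_psi]
        simp [gv, InnerProductSpace.toDual_apply_apply, PiLp.inner_apply, RCLike.inner_apply,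
          Fin.sum_univ_four, EuclideanSpace.single_apply]
        ring) hP2,
      key 3 _ _ (fun y => by
        rw [fderiv_psi]
        simp [gv, InnerProductSpace.toDual_apply_apply, PiLp.inner_apply, RCLike.inner_apply,
          Fin.sum_univ_four, EuclideanSpace.single_apply]
        ring) hP3,
      hn]
    simp [ContinuousLinearMap.add_apply, ContinuousLinearMap.sub_apply,
      ContinuousLinearMap.smul_apply, EuclideanSpace.single_apply,
      proj_apply', smul_eq_mul]
    ring
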